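/- Let α ≥ 0, r ≥ 0, δ ∈ ℝ and β ∈ {0,1}, and Λ₋(k) = −(1/2)√(2√(k²+k⁴)+2k²). Then there exists C such that for all t ≥ 1 and k ∈ ℝ, e^{Λ₋(k)(t−1)} ∫_{(t+1)/2}^{t} e^{|Λ₋(k)|(s−1)} |Λ₋(k)|^β s^{−δ} μ_{α,r}(k,s) ds ≤ C t^{−(δ−1+β)} μ_{α,r}(k,t). -/

import Mathlib

open MeasureTheory

noncomputable def mu (α r k t : ℝ) : ℝ := 1 / (1 + (|k| * t ^ r) ^ α)

noncomputable def LamMinus (k : ℝ) : ℝ := -(1/2) * Real.sqrt (2 * Real.sqrt (k^2 + k^4) + 2 * k^2)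

lemma LamMinus_nonpos (k : ℝ) : LamMinus k ≤ 0 :=
  mul_nonpos_of_nonpos_of_nonneg (by norm_num) (Real.sqrt_nonneg _)

lemma mu_pos (α r k : ℝ) {t : ℝ} (ht : 0 < t) : 0 < mu α r k t := by
  unfold mu; positivity

lemma mu_comp (α r k : ℝ) (hα : 0 ≤ α) (hr : 0 ≤ r) {s t : ℝ} (hs : 0 < s) (ht : 0 < t)
    (h2 : t ≤ 2 * s) : mu α r k s ≤ 2 ^ (r * α) * mu α r k t := by
  have hXs : (0:ℝ) ≤ (|k| * s ^ r) ^ α := by positivity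
  have hXt : (0:ℝ) ≤ (|k| * t ^ r) ^ α := by positivity
  have h1 : t ^ r ≤ 2 ^ r * s ^ r := by
    calc t ^ r ≤ (2 * s) ^ r := Real.rpow_le_rpow ht.le h2 hr
    _ = 2 ^ r * s ^ r := Real.mul_rpow (by norm_num) hs.le
  have h2' : |k| * t ^ r ≤ 2 ^ r * (|k| * s ^ r) := by
    have := mul_le_mul_of_nonneg_left h1 (abs_nonneg k)
    nlinarith [abs_nonneg k, Real.rpow_nonneg (le_of_lt hs) r]
  have h3 : (|k| * t ^ r) ^ α ≤ 2 ^ (r * α) * (|k| * s ^ r) ^ α := by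
    calc (|k| * t ^ r) ^ α ≤ (2 ^ r * (|k| * s ^ r)) ^ α :=
          Real.rpow_le_rpow (by positivity) h2' hα
    _ = (2 ^ r) ^ α * (|k| * s ^ r) ^ α := Real.mul_rpow (by positivity) (by positivity)
    _ = 2 ^ (r * α) * (|k| * s ^ r) ^ α := by rw [← Real.rpow_mul (by norm_num)]
  have hone : (1:ℝ) ≤ 2 ^ (r * α) := by
    calc (1:ℝ) = 2 ^ (0:ℝ) := (Real.rpow_zero 2).symm
    _ ≤ 2 ^ (r * α) := Real.rpow_le_rpow_of_exponent_le (by norm_num) (by positivity)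
  unfold mu
  rw [mul_one_div, div_le_div_iff₀ (by positivity) (by positivity)]
  nlinarith [hXs, hXt]

lemma pointwise_bound (α r δ k : ℝ) (hα : 0 ≤ α) (hr : 0 ≤ r) {t s : ℝ} (ht : 1 ≤ t)
    (hs1 : (t + 1) / 2 ≤ s) (hs2 : s ≤ t) :
    s ^ (-δ) * mu α r k s ≤
      (max (2 ^ δ) 1 * 2 ^ (r * α)) * (t ^ (-δ) * mu α r k t) := by
  have ht0 : 0 < t := by linarith
  have hs0 : 0 < s := by linarith
  have h2s : t ≤ 2 * s := by linarith
  have part1 : s ^ (-δ) ≤ max (2 ^ δ) 1 * t ^ (-δ) := by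
    rcases le_or_gt 0 δ with hδ | hδ
    · have h1 : s ^ (-δ) ≤ (t / 2) ^ (-δ) :=
        Real.rpow_le_rpow_of_nonpos (by linarith) (by linarith) (by linarith)
      have h2 : (t / 2) ^ (-δ) = 2 ^ δ * t ^ (-δ) := by
        rw [Real.div_rpow ht0.le (by norm_num), Real.rpow_neg (by norm_num : (0:ℝ) ≤ 2)]
        field_simp
      calc s ^ (-δ) ≤ 2 ^ δ * t ^ (-δ) := by rw [← h2]; exact h1
      _ ≤ max (2 ^ δ) 1 * t ^ (-δ) :=
        mul_le_mul_of_nonneg_right (le_max_left _ _) (by positivity)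
    · calc s ^ (-δ) ≤ t ^ (-δ) := Real.rpow_le_rpow hs0.le hs2 (by linarith)
      _ ≤ max (2 ^ δ) 1 * t ^ (-δ) := by
        nlinarith [Real.rpow_nonneg ht0.le (-δ), le_max_right (2 ^ δ) (1:ℝ)]
  have part2 : mu α r k s ≤ 2 ^ (r * α) * mu α r k t := mu_comp α r k hα hr hs0 ht0 h2s
  calc s ^ (-δ) * mu α r k s ≤ (max (2 ^ δ) 1 * t ^ (-δ)) * (2 ^ (r * α) * mu α r k t) :=
        mul_le_mul part1 part2 (mu_pos α r k hs0).le (by positivity)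
  _ = (max (2 ^ δ) 1 * 2 ^ (r * α)) * (t ^ (-δ) * mu α r k t) := by ring

lemma integral_L_exp (L a t : ℝ) (hat : a ≤ t) :
    ∫ s in Set.Icc a t, L * Real.exp (L * (s - 1)) =
      Real.exp (L * (t - 1)) - Real.exp (L * (a - 1)) := by
  rw [MeasureTheory.integral_Icc_eq_integral_Ioc, ← intervalIntegral.integral_of_le hat]
  have hderiv : ∀ s ∈ Set.uIcc a t,
      HasDerivAt (fun x => Real.exp (L * (x - 1))) (L * Real.exp (L * (s - 1))) s := by
    intro s _
    have h1 : HasDerivAt (fun x : ℝ => L * (x - 1)) L s := by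
      simpa using ((hasDerivAt_id s).sub_const 1).const_mul L
    simpa [mul_comm] using h1.exp
  exact intervalIntegral.integral_eq_sub_of_hasDerivAt hderiv
    ((Continuous.mul continuous_const (by fun_prop)).intervalIntegrable a t)

lemma cont_integrand (α r δ k L : ℝ) (hα : 0 ≤ α) (hr : 0 ≤ r) (a t : ℝ) (ha : 0 < a) :
    IntegrableOn (fun s => Real.exp (L * (s - 1)) * s ^ (-δ) * mu α r k s)
      (Set.Icc a t) := by
  apply ContinuousOn.integrableOn_Icc
  have h0 : ∀ s ∈ Set.Icc a t, s ≠ 0 := fun s hs => by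
    have := hs.1; intro h; rw [h] at this; linarith
  apply ContinuousOn.mul
  apply ContinuousOn.mul
  · exact (Real.continuous_exp.comp (by fun_prop)).continuousOn
  · exact ContinuousOn.rpow_const continuousOn_id (fun s hs => Or.inl (h0 s hs))
  · unfold mu
    apply ContinuousOn.div continuousOn_const
    · apply ContinuousOn.add continuousOn_const
      apply ContinuousOn.rpow_const _ (fun s hs => Or.inr hα)
      exact ContinuousOn.mul continuousOn_const
        (ContinuousOn.rpow_const continuousOn_id (fun s hs => Or.inr hr))
    · intro s hs
      have hs0 : (0:ℝ) < s := lt_of_lt_of_le ha hs.1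
      have : (0:ℝ) ≤ (|k| * s ^ r) ^ α :=
        Real.rpow_nonneg (mul_nonneg (abs_nonneg k) (Real.rpow_nonneg hs0.le r)) α
      intro h; linarith

theorem semigroup_Lam_integral_bound_middle (α r δ β : ℝ)
    (hα : 0 ≤ α) (hr : 0 ≤ r) (hβ : β = 0 ∨ β = 1) :
    ∃ C : ℝ, ∀ t k : ℝ, 1 ≤ t →
      Real.exp (LamMinus k * (t - 1)) *
          ∫ s in Set.Icc ((t + 1) / 2) t,
            Real.exp (|LamMinus k| * (s - 1)) * |LamMinus k| ^ β * s ^ (-δ) * mu α r k s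
        ≤ C * t ^ (-(δ - 1 + β)) * mu α r k t := by
  refine ⟨max (2 ^ δ) 1 * 2 ^ (r * α), fun t k ht => ?_⟩
  set K : ℝ := max (2 ^ δ) 1 * 2 ^ (r * α) with hKdef
  have hK : 0 < K := by positivity
  set L : ℝ := |LamMinus k| with hL
  have hL0 : 0 ≤ L := abs_nonneg _
  have hLam : LamMinus k = -L := by
    rw [hL, abs_of_nonpos (LamMinus_nonpos k), neg_neg]
  set a : ℝ := (t + 1) / 2 with ha
  have hat : a ≤ t := by rw [ha]; linarith
  have ha1 : 1 ≤ a := by rw [ha]; linarith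
  have ht0 : 0 < t := by linarith
  have hmut : 0 < mu α r k t := mu_pos α r k ht0
  have hexp0 : (0:ℝ) < Real.exp (LamMinus k * (t - 1)) := Real.exp_pos _
  rcases hβ with rfl | rfl
  · -- β = 0
    have hI : (∫ s in Set.Icc a t,
          Real.exp (L * (s - 1)) * L ^ (0:ℝ) * s ^ (-δ) * mu α r k s)
        ≤ ∫ s in Set.Icc a t, K * (t ^ (-δ) * mu α r k t) * Real.exp (L * (t - 1)) := by
      apply setIntegral_mono_on
      · simpa [Real.rpow_zero, mul_one] using cont_integrand α r δ k L hα hr a t (by linarith : (0:ℝ) < a)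
      · exact integrableOn_const (by rw [Real.volume_Icc]; exact ENNReal.ofReal_ne_top)
      · exact measurableSet_Icc
      · intro s hs
        rw [Real.rpow_zero, mul_one]
        have h1 : Real.exp (L * (s - 1)) ≤ Real.exp (L * (t - 1)) :=
          Real.exp_le_exp.2 (mul_le_mul_of_nonneg_left (by linarith [hs.2]) hL0)
        have h2 : s ^ (-δ) * mu α r k s ≤ K * (t ^ (-δ) * mu α r k t) :=
          pointwise_bound α r δ k hα hr ht hs.1 hs.2
        have hs0' : (0:ℝ) < s := by linarith [hs.1]
        have hsm : 0 ≤ s ^ (-δ) * mu α r k s :=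
          mul_nonneg (Real.rpow_nonneg hs0'.le _) (mu_pos α r k hs0').le
        calc Real.exp (L * (s - 1)) * s ^ (-δ) * mu α r k s
            = (s ^ (-δ) * mu α r k s) * Real.exp (L * (s - 1)) := by ring
          _ ≤ (K * (t ^ (-δ) * mu α r k t)) * Real.exp (L * (t - 1)) :=
            mul_le_mul h2 h1 (Real.exp_pos _).le (by positivity)
    have hIc : (∫ s in Set.Icc a t, K * (t ^ (-δ) * mu α r k t) * Real.exp (L * (t - 1)))
        = (t - a) * (K * (t ^ (-δ) * mu α r k t) * Real.exp (L * (t - 1))) := by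
      rw [setIntegral_const, measureReal_def, Real.volume_Icc, smul_eq_mul,
        ENNReal.toReal_ofReal (by linarith : (0:ℝ) ≤ t - a)]
    have hfinal : Real.exp (LamMinus k * (t - 1)) *
        ((t - a) * (K * (t ^ (-δ) * mu α r k t) * Real.exp (L * (t - 1))))
        ≤ K * t ^ (-(δ - 1 + 0)) * mu α r k t := by
      rw [hLam]
      have hee : Real.exp (-L * (t - 1)) * Real.exp (L * (t - 1)) = 1 := by
        rw [← Real.exp_add]; ring_nf; exact Real.exp_zero
      have hta : t - a ≤ t := by linarith
      have hrp : t ^ (-δ) * t = t ^ (-(δ - 1 + 0)) := by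
        rw [show (-(δ - 1 + 0)) = -δ + 1 by ring, Real.rpow_add ht0, Real.rpow_one]
      calc Real.exp (-L * (t - 1)) *
            ((t - a) * (K * (t ^ (-δ) * mu α r k t) * Real.exp (L * (t - 1))))
          = (t - a) * (K * (t ^ (-δ) * mu α r k t)) *
              (Real.exp (-L * (t - 1)) * Real.exp (L * (t - 1))) := by ring
        _ = (t - a) * (K * (t ^ (-δ) * mu α r k t)) := by rw [hee, mul_one]
        _ ≤ t * (K * (t ^ (-δ) * mu α r k t)) := by
            apply mul_le_mul_of_nonneg_right hta
            positivity
        _ = K * (t ^ (-δ) * t) * mu α r k t := by ring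
        _ = K * t ^ (-(δ - 1 + 0)) * mu α r k t := by rw [hrp]
    calc Real.exp (LamMinus k * (t - 1)) *
          ∫ s in Set.Icc a t, Real.exp (L * (s - 1)) * L ^ (0:ℝ) * s ^ (-δ) * mu α r k s
        ≤ Real.exp (LamMinus k * (t - 1)) *
          ((t - a) * (K * (t ^ (-δ) * mu α r k t) * Real.exp (L * (t - 1)))) := by
          rw [← hIc]; exact mul_le_mul_of_nonneg_left hI hexp0.le
      _ ≤ K * t ^ (-(δ - 1 + 0)) * mu α r k t := hfinal
  · -- β = 1
    have hI : (∫ s in Set.Icc a t,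
          Real.exp (L * (s - 1)) * L ^ (1:ℝ) * s ^ (-δ) * mu α r k s)
        ≤ ∫ s in Set.Icc a t, K * (t ^ (-δ) * mu α r k t) * (L * Real.exp (L * (s - 1))) := by
      apply setIntegral_mono_on
      · have := cont_integrand α r δ k L hα hr a t (by linarith : (0:ℝ) < a)
        have h2 : IntegrableOn (fun s => L * (Real.exp (L * (s - 1)) * s ^ (-δ) * mu α r k s))
            (Set.Icc a t) := this.const_mul L
        apply h2.congr_fun _ measurableSet_Icc
        intro s hs
        rw [Real.rpow_one]; ring
      · exact ((continuous_const.mul ((continuous_const.mul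
          (Real.continuous_exp.comp (by fun_prop))))).integrableOn_Icc)
      · exact measurableSet_Icc
      · intro s hs
        rw [Real.rpow_one]
        have h2 : s ^ (-δ) * mu α r k s ≤ K * (t ^ (-δ) * mu α r k t) :=
          pointwise_bound α r δ k hα hr ht hs.1 hs.2
        have hle : L * Real.exp (L * (s - 1)) ≥ 0 := by positivity
        calc Real.exp (L * (s - 1)) * L * s ^ (-δ) * mu α r k s
            = (s ^ (-δ) * mu α r k s) * (L * Real.exp (L * (s - 1))) := by ring
          _ ≤ (K * (t ^ (-δ) * mu α r k t)) * (L * Real.exp (L * (s - 1))) := by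
              apply mul_le_mul_of_nonneg_right h2 hle
          _ = K * (t ^ (-δ) * mu α r k t) * (L * Real.exp (L * (s - 1))) := by ring
    have hIc : (∫ s in Set.Icc a t, K * (t ^ (-δ) * mu α r k t) * (L * Real.exp (L * (s - 1))))
        = K * (t ^ (-δ) * mu α r k t) * (Real.exp (L * (t - 1)) - Real.exp (L * (a - 1))) := by
      rw [MeasureTheory.integral_const_mul, integral_L_exp L a t hat]
    have hfinal : Real.exp (LamMinus k * (t - 1)) *
        (K * (t ^ (-δ) * mu α r k t) * (Real.exp (L * (t - 1)) - Real.exp (L * (a - 1))))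
        ≤ K * t ^ (-(δ - 1 + 1)) * mu α r k t := by
      rw [hLam]
      have hee : Real.exp (-L * (t - 1)) * Real.exp (L * (t - 1)) = 1 := by
        rw [← Real.exp_add]; ring_nf; exact Real.exp_zero
      have hdiff : Real.exp (-L * (t - 1)) *
          (Real.exp (L * (t - 1)) - Real.exp (L * (a - 1))) ≤ 1 := by
        have : Real.exp (L * (t - 1)) - Real.exp (L * (a - 1)) ≤ Real.exp (L * (t - 1)) := by
          linarith [(Real.exp_pos (L * (a - 1))).le]
        calc Real.exp (-L * (t - 1)) * (Real.exp (L * (t - 1)) - Real.exp (L * (a - 1)))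
            ≤ Real.exp (-L * (t - 1)) * Real.exp (L * (t - 1)) :=
              mul_le_mul_of_nonneg_left this (Real.exp_pos _).le
          _ = 1 := hee
      have hexpδ : t ^ (-(δ - 1 + 1)) = t ^ (-δ) := by norm_num
      calc Real.exp (-L * (t - 1)) *
            (K * (t ^ (-δ) * mu α r k t) * (Real.exp (L * (t - 1)) - Real.exp (L * (a - 1))))
          = (K * (t ^ (-δ) * mu α r k t)) *
            (Real.exp (-L * (t - 1)) * (Real.exp (L * (t - 1)) - Real.exp (L * (a - 1)))) := by
            ring
        _ ≤ (K * (t ^ (-δ) * mu α r k t)) * 1 := by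
            apply mul_le_mul_of_nonneg_left hdiff; positivity
        _ = K * t ^ (-(δ - 1 + 1)) * mu α r k t := by rw [hexpδ]; ring
    calc Real.exp (LamMinus k * (t - 1)) *
          ∫ s in Set.Icc a t, Real.exp (L * (s - 1)) * L ^ (1:ℝ) * s ^ (-δ) * mu α r k s
        ≤ Real.exp (LamMinus k * (t - 1)) *
          (K * (t ^ (-δ) * mu α r k t) * (Real.exp (L * (t - 1)) - Real.exp (L * (a - 1)))) := by
          rw [← hIc]; exact mul_le_mul_of_nonneg_left hI hexp0.le
      _ ≤ K * t ^ (-(δ - 1 + 1)) * mu α r k t := hfinal
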